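/- For the conjugate Gaussian similarity function g of the previous context with fixed n ≥ 2 and fixed sample mean x̄, g(x_1,…,x_n) is maximized (over configurations with that mean) when all x_i are equal, i.e., when the sample variance Σ_i (x_i − x̄)² is zero, and g is strictly decreasing in Σ_i (x_i − x̄)². -/

import Mathlib

open MeasureTheory Real Finset

/-- Gaussian density with mean `m`, variance `v`, evaluated at `x`. -/
noncomputable def gpdf (m v x : ℝ) : ℝ :=
  (Real.sqrt (2 * Real.pi * v))⁻¹ * Real.exp (-((x - m) ^ 2) / (2 * v))

/-- Inverse-gamma density with shape `a` and rate `b`. -/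
noncomputable def igpdf (a b x : ℝ) : ℝ :=
  b ^ a / Real.Gamma a * x ^ (-(a + 1)) * Real.exp (-b / x)

/-- The conjugate Gaussian similarity function
`g(x) = ∫∫ ∏ᵢ N(xᵢ; μ, σ²) N(μ; 0, cσ²) IG(σ²; a, b) dμ dσ²`. -/
noncomputable def gSim (n : ℕ) (a b c : ℝ) (x : Fin n → ℝ) : ℝ :=
  ∫ s in Set.Ioi (0 : ℝ),
    (∫ μ : ℝ, (∏ i, gpdf μ s (x i)) * gpdf 0 (c * s) μ) * igpdf a b s

lemma gammaInt {p D : ℝ} (hp : 0 < p) (hD : 0 < D) :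
    ∫ s in Set.Ioi (0:ℝ), s ^ (-(p+1)) * Real.exp (-(D/s)) = (1/D)^p * Real.Gamma p := by
  rw [← Real.integral_rpow_mul_exp_neg_mul_Ioi hp hD,
    ← MeasureTheory.integral_comp_rpow_Ioi (fun t : ℝ => t ^ (p-1) * Real.exp (-(D*t)))
      (p := -1) (by norm_num)]
  refine setIntegral_congr_fun measurableSet_Ioi fun s hs => ?_
  have hs' : (0:ℝ) < s := hs
  simp only [smul_eq_mul, Real.rpow_neg_one]
  rw [Real.inv_rpow hs'.le, ← Real.rpow_neg hs'.le, mul_comm D s⁻¹, inv_mul_eq_div,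
    show (-1:ℝ) - 1 = -2 by norm_num, abs_neg, abs_one, one_mul,
    mul_comm (s ^ (-2:ℝ)), mul_assoc, mul_comm (Real.exp _) (s ^ (-2:ℝ)), ← mul_assoc,
    ← Real.rpow_add hs', show -(p-1) + -2 = -(p+1) by ring]

lemma sum_sq_dev {n : ℕ} (hn : (n:ℝ) ≠ 0) (x : Fin n → ℝ) (μ : ℝ) :
    ∑ i, (x i - μ)^2
      = (∑ i, (x i - (∑ i, x i)/n)^2) + n * ((∑ i, x i)/n - μ)^2 := by
  set m : ℝ := (∑ i, x i)/n with hm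
  have hs : ∑ i, x i = n * m := by
    rw [hm, mul_div_assoc', mul_comm, mul_div_assoc, div_self hn, mul_one]
  have h1 : ∀ i : Fin n, (x i - μ)^2
      = (x i - m)^2 + ((m - μ)*(2*(x i)) - (m-μ)*(μ+m)) := fun i => by ring
  have h2 : ∀ i : Fin n, (x i - m)^2 + ((m - μ)*(2*(x i)) - (m-μ)*(μ+m))
      = (x i - m)^2 + (m - μ)*(2*(x i)) - (m-μ)*(μ+m) := fun i => by ring
  rw [Finset.sum_congr rfl (fun i _ => (h1 i).trans (h2 i)),
    Finset.sum_sub_distrib, Finset.sum_add_distrib, ← Finset.mul_sum, ← Finset.mul_sum, hs,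
    Finset.sum_const, Finset.card_univ, Fintype.card_fin, nsmul_eq_mul]
  ring

lemma inner_eq {n : ℕ} (hn : (n:ℝ) ≠ 0) {c s : ℝ} (hc : 0 < c) (hs : 0 < s)
    (x : Fin n → ℝ) :
    ∫ μ : ℝ, (∏ i, gpdf μ s (x i)) * gpdf 0 (c * s) μ
      = (Real.sqrt (2*Real.pi))⁻¹^n * Real.sqrt (1/(n*c+1)) * s ^ (-((n:ℝ)/2)) *
        Real.exp (-(((∑ i, (x i - (∑ i, x i)/n)^2)
          + n*((∑ i, x i)/n)^2/(n*c+1)) / (2*s))) := by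
  have hn' : (0:ℝ) < n := lt_of_le_of_ne (Nat.cast_nonneg n) (Ne.symm hn)
  set m : ℝ := (∑ i, x i)/n with hm
  set S : ℝ := ∑ i, (x i - m)^2 with hS
  have hnc : (0:ℝ) < n*c+1 := by positivity
  set α : ℝ := (n*c+1)/(2*c*s) with hα
  set β : ℝ := n*c*m/(n*c+1) with hβ
  set K : ℝ := n*m^2/(n*c+1) with hK
  have hαpos : 0 < α := by positivity
  have key : ∀ μ : ℝ, (∏ i, gpdf μ s (x i)) * gpdf 0 (c*s) μ
      = ((Real.sqrt (2*Real.pi*s))⁻¹^n * (Real.sqrt (2*Real.pi*(c*s)))⁻¹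
          * Real.exp (-((S+K)/(2*s)))) * Real.exp (-α * (μ-β)^2) := by
    intro μ
    unfold gpdf
    rw [Finset.prod_mul_distrib, Finset.prod_const, Finset.card_univ, Fintype.card_fin,
      ← Real.exp_sum]
    have e1 : (∑ i, -((x i - μ)^2) / (2*s)) + (-((μ - 0)^2)/(2*(c*s)))
        = -((S+K)/(2*s)) + (-α * (μ-β)^2) := by
      have h0 : ∑ i, -((x i - μ)^2) / (2*s) = -(∑ i, (x i - μ)^2)/(2*s) := by
        rw [← Finset.sum_div, ← Finset.sum_neg_distrib]
      rw [h0, sum_sq_dev hn x μ, ← hm, ← hS, hK, hα, hβ]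
      field_simp
      ring
    calc (Real.sqrt (2*Real.pi*s))⁻¹^n * Real.exp (∑ i, -((x i - μ)^2) / (2*s))
          * ((Real.sqrt (2*Real.pi*(c*s)))⁻¹ * Real.exp (-((μ - 0)^2)/(2*(c*s))))
        = (Real.sqrt (2*Real.pi*s))⁻¹^n * (Real.sqrt (2*Real.pi*(c*s)))⁻¹
          * Real.exp ((∑ i, -((x i - μ)^2) / (2*s)) + (-((μ - 0)^2)/(2*(c*s)))) := by
          rw [Real.exp_add]; ring
      _ = _ := by rw [e1, Real.exp_add]; ring
  rw [MeasureTheory.integral_congr_ae (Filter.Eventually.of_forall key),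
    MeasureTheory.integral_const_mul]
  have hshift : ∫ μ : ℝ, Real.exp (-α * (μ-β)^2)
      = Real.sqrt (Real.pi / α) := by
    rw [show (fun μ : ℝ => Real.exp (-α * (μ-β)^2))
        = (fun t : ℝ => Real.exp (-α * t^2)) ∘ (fun μ => μ - β) from rfl]
    exact (MeasureTheory.integral_sub_right_eq_self
      (fun t : ℝ => Real.exp (-α * t^2)) β).trans (integral_gaussian α)
  rw [hshift]
  have h1 : Real.sqrt (Real.pi / α) = Real.sqrt (2*Real.pi*(c*s)) * Real.sqrt (1/(n*c+1)) := by
    rw [← Real.sqrt_mul (by positivity)]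
    congr 1
    rw [hα]; field_simp
  have h2 : (Real.sqrt (2*Real.pi*s))⁻¹^n
      = (Real.sqrt (2*Real.pi))⁻¹^n * s ^ (-((n:ℝ)/2)) := by
    rw [Real.sqrt_mul (by positivity) s, mul_inv, mul_pow]
    congr 1
    rw [Real.sqrt_eq_rpow, ← Real.rpow_neg hs.le, ← Real.rpow_natCast (s ^ (-(1/2:ℝ))) n,
      ← Real.rpow_mul hs.le]
    rw [show -(1/2:ℝ)*(n:ℕ) = -((n:ℝ)/2) by ring]
  have hne : Real.sqrt (2*Real.pi*(c*s)) ≠ 0 := by positivity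
  rw [h1, h2]
  field_simp

lemma gSim_closed (n : ℕ) (hn : (n:ℝ) ≠ 0) {a b c : ℝ}
    (ha : 0 < a) (hb : 0 < b) (hc : 0 < c) (x : Fin n → ℝ) :
    gSim n a b c x
      = ((Real.sqrt (2*Real.pi))⁻¹^n * Real.sqrt (1/(n*c+1)) * (b ^ a / Real.Gamma a)
          * Real.Gamma ((n:ℝ)/2 + a)) *
        (1/(b + ((∑ i, (x i - (∑ i, x i)/n)^2)
            + n*((∑ i, x i)/n)^2/(n*c+1))/2)) ^ ((n:ℝ)/2 + a) := by
  have hn' : (0:ℝ) < n := lt_of_le_of_ne (Nat.cast_nonneg n) (Ne.symm hn)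
  have hnc : (0:ℝ) < n*c+1 := by positivity
  set S : ℝ := ∑ i, (x i - (∑ i, x i)/n)^2 with hS
  have hS0 : 0 ≤ S := Finset.sum_nonneg fun i _ => sq_nonneg _
  set K : ℝ := n*((∑ i, x i)/n)^2/(n*c+1) with hK
  have hK0 : 0 ≤ K := by positivity
  set D : ℝ := b + (S+K)/2 with hD
  have hD0 : 0 < D := by positivity
  set p : ℝ := (n:ℝ)/2 + a with hp
  have hp0 : 0 < p := by positivity
  set C : ℝ := (Real.sqrt (2*Real.pi))⁻¹^n * Real.sqrt (1/(n*c+1)) * (b ^ a / Real.Gamma a)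
    with hC
  have step : ∀ s ∈ Set.Ioi (0:ℝ),
      (∫ μ : ℝ, (∏ i, gpdf μ s (x i)) * gpdf 0 (c * s) μ) * igpdf a b s
        = C * (s ^ (-(p+1)) * Real.exp (-(D/s))) := by
    intro s hs
    have hs' : (0:ℝ) < s := hs
    rw [inner_eq hn hc hs' x]
    unfold igpdf
    rw [← hS]
    have hrp : s ^ (-((n:ℝ)/2)) * s ^ (-(a+1)) = s ^ (-(p+1)) := by
      rw [← Real.rpow_add hs', hp]; ring_nf
    have hex : Real.exp (-((S+K)/(2*s))) * Real.exp (-b/s) = Real.exp (-(D/s)) := by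
      rw [← Real.exp_add]
      congr 1
      rw [hD]
      field_simp
      ring
    calc (Real.sqrt (2*Real.pi))⁻¹^n * Real.sqrt (1/(n*c+1)) * s ^ (-((n:ℝ)/2)) *
          Real.exp (-((S + K) / (2*s))) * (b ^ a / Real.Gamma a * s ^ (-(a+1))
            * Real.exp (-b/s))
        = C * ((s ^ (-((n:ℝ)/2)) * s ^ (-(a+1)))
            * (Real.exp (-((S+K)/(2*s))) * Real.exp (-b/s))) := by rw [hC]; ring
      _ = C * (s ^ (-(p+1)) * Real.exp (-(D/s))) := by rw [hrp, hex]
  unfold gSim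
  rw [setIntegral_congr_fun measurableSet_Ioi step, MeasureTheory.integral_const_mul,
    gammaInt hp0 hD0]
  ring

theorem conjugate_gaussian_similarity_max_at_equal (n : ℕ) (hn : 2 ≤ n)
    (a b c : ℝ) (ha : 0 < a) (hb : 0 < b) (hc : 0 < c) :
    (∀ x x' : Fin n → ℝ,
      (∑ i, x i) / n = (∑ i, x' i) / n →
      (∑ i, (x i - (∑ i, x i) / n) ^ 2) < (∑ i, (x' i - (∑ i, x' i) / n) ^ 2) →
      gSim n a b c x' < gSim n a b c x) ∧
    (∀ x : Fin n → ℝ,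
      0 < ∑ i, (x i - (∑ i, x i) / n) ^ 2 →
      gSim n a b c x < gSim n a b c (fun _ => (∑ i, x i) / n)) := by
  have hn0 : (n:ℝ) ≠ 0 := by
    have : (0:ℝ) < n := by exact_mod_cast lt_of_lt_of_le (by norm_num) hn
    exact this.ne'
  have hn' : (0:ℝ) < n := lt_of_le_of_ne (Nat.cast_nonneg n) (Ne.symm hn0)
  have hnc : (0:ℝ) < n*c+1 := by positivity
  set p : ℝ := (n:ℝ)/2 + a with hp
  have hp0 : 0 < p := by positivity
  set C : ℝ := (Real.sqrt (2*Real.pi))⁻¹^n * Real.sqrt (1/(n*c+1)) * (b ^ a / Real.Gamma a)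
      * Real.Gamma ((n:ℝ)/2 + a) with hC
  have hCpos : 0 < C := by
    rw [hC]
    have h1 : 0 < Real.sqrt (2*Real.pi) := Real.sqrt_pos.mpr (by positivity)
    have h2 : 0 < Real.Gamma a := Real.Gamma_pos_of_pos ha
    have h3 : 0 < Real.Gamma ((n:ℝ)/2 + a) := Real.Gamma_pos_of_pos (by positivity)
    have h4 : 0 < b ^ a := Real.rpow_pos_of_pos hb a
    have h5 : 0 < Real.sqrt (1/((n:ℝ)*c+1)) := Real.sqrt_pos.mpr (by positivity)
    positivity
  have main : ∀ x x' : Fin n → ℝ,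
      (∑ i, x i) / n = (∑ i, x' i) / n →
      (∑ i, (x i - (∑ i, x i) / n) ^ 2) < (∑ i, (x' i - (∑ i, x' i) / n) ^ 2) →
      gSim n a b c x' < gSim n a b c x := by
    intro x x' hmean hlt
    rw [gSim_closed n hn0 ha hb hc x, gSim_closed n hn0 ha hb hc x', ← hC, ← hmean, ← hp]
    rw [← hmean] at hlt
    set S : ℝ := ∑ i, (x i - (∑ i, x i)/n)^2 with hSdef
    set S' : ℝ := ∑ i, (x' i - (∑ i, x i)/n)^2 with hS'def
    set K : ℝ := (n:ℝ)*((∑ i, x i)/n)^2/(n*c+1) with hKdef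
    have hS0 : 0 ≤ S := Finset.sum_nonneg fun i _ => sq_nonneg _
    have hK0 : 0 ≤ K := by positivity
    have hD1 : (0:ℝ) < b + (S+K)/2 := by positivity
    have hD2 : (0:ℝ) < b + (S'+K)/2 := by positivity
    have hDlt : b + (S+K)/2 < b + (S'+K)/2 := by linarith
    have hinv : 1/(b + (S'+K)/2) < 1/(b + (S+K)/2) :=
      one_div_lt_one_div_of_lt hD1 hDlt
    have hbase : (0:ℝ) ≤ 1/(b + (S'+K)/2) := by positivity
    exact mul_lt_mul_of_pos_left (Real.rpow_lt_rpow hbase hinv hp0) hCpos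
  refine ⟨main, fun x hSx => ?_⟩
  have hmean : (∑ i, (fun _ : Fin n => (∑ i, x i) / n) i) / n = (∑ i, x i) / n := by
    simp only [Finset.sum_const, Finset.card_univ, Fintype.card_fin, nsmul_eq_mul]
    field_simp
  have hzero : (∑ i, ((fun _ : Fin n => (∑ i, x i) / n) i
      - (∑ i, (fun _ : Fin n => (∑ i, x i) / n) i) / n) ^ 2) = 0 := by
    rw [hmean]
    simp
  exact main (fun _ => (∑ i, x i) / n) x hmean (by rw [hzero]; exact hSx)
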